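/- Let ℓ be a prime, s a positive integer, and A ∈ Mat_2(ℤ/ℓ^s ℤ) a matrix that is not a scalar multiple of the identity. Let μ < s be the maximal non-negative integer such that A is congruent to a scalar matrix modulo ℓ^μ. Then there exists a matrix A' ∈ Mat_2(ℤ/ℓ^s ℤ) with ℓ^μ A' - A a scalar matrix, such that every matrix M commuting with A satisfies ℓ^μ M ∈ ℤ·A' + ℤ·I modulo the matrices in Mat_2(ℓ^{s-μ}ℤ/ℓ^s ℤ) that commute with A. -/

import Mathlib

section Aux

variable {ℓ s : ℕ}

lemma zmod_unit_or_dvd (hℓ : ℓ.Prime) (x : ZMod (ℓ ^ s)) :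
    IsUnit x ∨ ∃ z : ZMod (ℓ ^ s), x = (ℓ : ZMod (ℓ ^ s)) * z := by
  haveI : NeZero (ℓ ^ s) := ⟨pow_ne_zero s hℓ.pos.ne'⟩
  by_cases h : ℓ ∣ x.val
  · right
    obtain ⟨k, hk⟩ := h
    refine ⟨(k : ZMod (ℓ ^ s)), ?_⟩
    have hx : ((x.val : ℕ) : ZMod (ℓ ^ s)) = x := ZMod.natCast_rightInverse x
    rw [← hx, hk]
    push_cast
    ring
  · left
    have hco : Nat.Coprime x.val (ℓ ^ s) :=
      ((Nat.Prime.coprime_iff_not_dvd hℓ).mpr h).symm.pow_right s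
    have hx : ((x.val : ℕ) : ZMod (ℓ ^ s)) = x := ZMod.natCast_rightInverse x
    rw [← hx]
    exact (ZMod.isUnit_iff_coprime _ _).mpr hco

lemma zmod_ell_not_unit (hℓ : ℓ.Prime) (hs : 0 < s) : ¬ IsUnit ((ℓ : ZMod (ℓ ^ s))) := by
  haveI : Fact (1 < ℓ ^ s) := ⟨Nat.one_lt_pow hs.ne' hℓ.one_lt⟩
  intro h
  have h2 := h.pow s
  rw [← Nat.cast_pow, ZMod.natCast_self] at h2
  exact not_isUnit_zero h2

lemma zmod_unit_add (hℓ : ℓ.Prime) (hs : 0 < s) (u w : ZMod (ℓ ^ s)) (hu : IsUnit u) :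
    IsUnit (u + (ℓ : ZMod (ℓ ^ s)) * w) := by
  rcases zmod_unit_or_dvd hℓ (u + (ℓ : ZMod (ℓ ^ s)) * w) with h | ⟨z, hz⟩
  · exact h
  · exfalso
    have hu' : u = (ℓ : ZMod (ℓ ^ s)) * (z - w) := by linear_combination hz
    rw [hu'] at hu
    exact zmod_ell_not_unit hℓ hs (isUnit_of_mul_isUnit_left hu)

end Aux

/-- Let `ℓ` be a prime, `s` a positive integer, and `A ∈ Mat₂(ℤ/ℓ^s ℤ)` a
matrix that is not a scalar multiple of the identity.  Let `μ < s` be the maximal non-negative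
integer such that `A` is congruent to a scalar matrix modulo `ℓ^μ`.  Then there exists
`A' ∈ Mat₂(ℤ/ℓ^s ℤ)` with `ℓ^μ A' - A` a scalar matrix, such that every matrix `M` commuting
with `A` satisfies `ℓ^μ M ∈ ℤ·A' + ℤ·I` modulo the matrices in `Mat₂(ℓ^{s-μ} ℤ/ℓ^s ℤ)` that
commute with `A`. -/
theorem commutant_of_nonscalar_matrix (ℓ : ℕ) (hℓ : ℓ.Prime) (s : ℕ) (hs : 0 < s)
    (A : Matrix (Fin 2) (Fin 2) (ZMod (ℓ ^ s)))
    (hA : ∀ c : ZMod (ℓ ^ s), A ≠ c • (1 : Matrix (Fin 2) (Fin 2) (ZMod (ℓ ^ s))))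
    (μ : ℕ) (hμs : μ < s)
    (hμ : ∃ c : ZMod (ℓ ^ s), ∀ i j, ∃ z : ZMod (ℓ ^ s),
      (A - c • 1) i j = (ℓ : ZMod (ℓ ^ s)) ^ μ * z)
    (hμmax : ¬ ∃ c : ZMod (ℓ ^ s), ∀ i j, ∃ z : ZMod (ℓ ^ s),
      (A - c • 1) i j = (ℓ : ZMod (ℓ ^ s)) ^ (μ + 1) * z) :
    ∃ A' : Matrix (Fin 2) (Fin 2) (ZMod (ℓ ^ s)),
      (∃ c : ZMod (ℓ ^ s), ((ℓ : ZMod (ℓ ^ s)) ^ μ) • A' - A = c • 1) ∧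
      ∀ M : Matrix (Fin 2) (Fin 2) (ZMod (ℓ ^ s)), A * M = M * A →
        ∃ (a b : ℤ) (N : Matrix (Fin 2) (Fin 2) (ZMod (ℓ ^ s))),
          (∀ i j, ∃ z : ZMod (ℓ ^ s), N i j = (ℓ : ZMod (ℓ ^ s)) ^ (s - μ) * z) ∧
          A * N = N * A ∧
          ((ℓ : ZMod (ℓ ^ s)) ^ μ) • M = a • A' + b • (1 : Matrix (Fin 2) (Fin 2) (ZMod (ℓ ^ s))) + N := by
  haveI : NeZero (ℓ ^ s) := ⟨pow_ne_zero s hℓ.pos.ne'⟩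
  obtain ⟨c, hc⟩ := hμ
  choose z hz using hc
  set B : Matrix (Fin 2) (Fin 2) (ZMod (ℓ ^ s)) := Matrix.of z with hBdef
  have hzB : ∀ i j, (A - c • 1) i j = (ℓ : ZMod (ℓ ^ s)) ^ μ * B i j := hz
  have hAc : A = c • 1 + ((ℓ : ZMod (ℓ ^ s)) ^ μ) • B := by
    ext i j
    have h := hzB i j
    simp only [Matrix.sub_apply, Matrix.add_apply, Matrix.smul_apply, smul_eq_mul] at h ⊢
    linear_combination h
  -- `B` is not scalar modulo `ℓ`
  have hscal : ∀ z1 z2 z3 : ZMod (ℓ ^ s), B 1 0 = (ℓ : ZMod (ℓ ^ s)) * z1 →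
      B 0 1 = (ℓ : ZMod (ℓ ^ s)) * z2 →
      B 1 1 - B 0 0 = (ℓ : ZMod (ℓ ^ s)) * z3 → False := by
    intro z1 z2 z3 hz1 hz2 hz3
    apply hμmax
    refine ⟨c + (ℓ : ZMod (ℓ ^ s)) ^ μ * B 0 0, ?_⟩
    intro i j
    fin_cases i <;> fin_cases j
    · refine ⟨0, ?_⟩
      have h := hzB 0 0
      simp only [Matrix.sub_apply, Matrix.smul_apply, Matrix.one_apply, smul_eq_mul,
        pow_succ] at h ⊢
      norm_num at h ⊢
      linear_combination h
    · refine ⟨z2, ?_⟩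
      have h := hzB 0 1
      simp only [Matrix.sub_apply, Matrix.smul_apply, Matrix.one_apply, smul_eq_mul,
        pow_succ] at h ⊢
      norm_num at h ⊢
      linear_combination h + (ℓ : ZMod (ℓ ^ s)) ^ μ * hz2
    · refine ⟨z1, ?_⟩
      have h := hzB 1 0
      simp only [Matrix.sub_apply, Matrix.smul_apply, Matrix.one_apply, smul_eq_mul,
        pow_succ] at h ⊢
      norm_num at h ⊢
      linear_combination h + (ℓ : ZMod (ℓ ^ s)) ^ μ * hz1
    · refine ⟨z3, ?_⟩
      have h := hzB 1 1
      simp only [Matrix.sub_apply, Matrix.smul_apply, Matrix.one_apply, smul_eq_mul,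
        pow_succ] at h ⊢
      norm_num at h ⊢
      linear_combination h + (ℓ : ZMod (ℓ ^ s)) ^ μ * hz3
  -- a vector `v` such that `(v, B v)` is a basis
  have hv : ∃ v : Fin 2 → ZMod (ℓ ^ s),
      IsUnit (v 0 * (B.mulVec v 1) - v 1 * (B.mulVec v 0)) := by
    rcases zmod_unit_or_dvd hℓ (B 1 0) with h10 | ⟨z1, hz1⟩
    · refine ⟨![1, 0], ?_⟩
      simpa [Matrix.mulVec, dotProduct, Fin.sum_univ_two] using h10
    rcases zmod_unit_or_dvd hℓ (B 0 1) with h01 | ⟨z2, hz2⟩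
    · refine ⟨![0, 1], ?_⟩
      simpa [Matrix.mulVec, dotProduct, Fin.sum_univ_two] using h01.neg
    have h3 : IsUnit (B 1 1 - B 0 0) := by
      rcases zmod_unit_or_dvd hℓ (B 1 1 - B 0 0) with h | ⟨z3, hz3⟩
      · exact h
      · exact (hscal z1 z2 z3 hz1 hz2 hz3).elim
    refine ⟨![1, 1], ?_⟩
    have hcalc : (![1, 1] : Fin 2 → ZMod (ℓ ^ s)) 0 * (B.mulVec ![1, 1] 1)
        - (![1, 1] : Fin 2 → ZMod (ℓ ^ s)) 1 * (B.mulVec ![1, 1] 0)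
        = (B 1 1 - B 0 0) + (ℓ : ZMod (ℓ ^ s)) * (z1 - z2) := by
      simp only [Matrix.mulVec, dotProduct, Fin.sum_univ_two,
        Matrix.cons_val_zero, Matrix.cons_val_one, Matrix.head_cons]
      linear_combination hz1 - hz2
    rw [hcalc]
    exact zmod_unit_add hℓ hs _ _ h3
  obtain ⟨v, hdet⟩ := hv
  refine ⟨B, ⟨-c, by rw [hAc]; ext i j
                     simp only [Matrix.sub_apply, Matrix.add_apply, Matrix.smul_apply,
                       Matrix.neg_apply, smul_eq_mul, neg_smul]
                     ring⟩, ?_⟩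
  intro M hM
  have hcomm : ((ℓ : ZMod (ℓ ^ s)) ^ μ) • (B * M) = ((ℓ : ZMod (ℓ ^ s)) ^ μ) • (M * B) := by
    have h := hM
    rw [hAc] at h
    simp only [Matrix.add_mul, Matrix.mul_add, Matrix.smul_mul, Matrix.mul_smul,
      Matrix.one_mul, Matrix.mul_one] at h
    exact add_left_cancel h
  set P : Matrix (Fin 2) (Fin 2) (ZMod (ℓ ^ s)) :=
    Matrix.of (fun i j => if j = 0 then v i else B.mulVec v i) with hPdef
  have hP0 : ∀ i, P i 0 = v i := fun i => rfl
  have hP1 : ∀ i, P i 1 = B.mulVec v i := fun i => by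
    show (if (1 : Fin 2) = 0 then v i else B.mulVec v i) = _
    rw [if_neg (by decide)]
  have hPdet : IsUnit P.det := by
    rw [Matrix.det_fin_two, hP0, hP0, hP1, hP1]
    simpa [mul_comm] using hdet
  have hPinv : P * P⁻¹ = 1 := Matrix.mul_nonsing_inv P hPdet
  set w : Fin 2 → ZMod (ℓ ^ s) := Matrix.mulVec P⁻¹ (Matrix.mulVec M v) with hwdef
  have hw : Matrix.mulVec P w = Matrix.mulVec M v := by
    rw [hwdef, Matrix.mulVec_mulVec, hPinv, Matrix.one_mulVec]
  set α := w 0 with hα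
  set β := w 1 with hβ
  have hv' : ∀ i, M.mulVec v i = α * v i + β * B.mulVec v i := by
    intro i
    rw [← hw]
    simp only [Matrix.mulVec, dotProduct, Fin.sum_univ_two, hP0, hP1]
    ring
  set D : Matrix (Fin 2) (Fin 2) (ZMod (ℓ ^ s)) := M - α • 1 - β • B with hDdef
  have hDv : D.mulVec v = 0 := by
    ext i
    rw [hDdef]
    simp only [Matrix.sub_mulVec, Matrix.smul_mulVec, Matrix.one_mulVec,
      Pi.sub_apply, Pi.smul_apply, Pi.zero_apply, smul_eq_mul]
    rw [hv' i]
    ring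
  have hDB : ((ℓ : ZMod (ℓ ^ s)) ^ μ) • (D * B) = ((ℓ : ZMod (ℓ ^ s)) ^ μ) • (B * D) := by
    rw [hDdef]
    simp only [Matrix.sub_mul, Matrix.mul_sub, Matrix.smul_mul, Matrix.mul_smul,
      Matrix.one_mul, Matrix.mul_one, smul_sub]
    rw [hcomm]
  have hDBv : ((ℓ : ZMod (ℓ ^ s)) ^ μ) • (D.mulVec (B.mulVec v)) = 0 := by
    calc ((ℓ : ZMod (ℓ ^ s)) ^ μ) • (D.mulVec (B.mulVec v))
        = ((ℓ : ZMod (ℓ ^ s)) ^ μ) • ((D * B).mulVec v) := by rw [Matrix.mulVec_mulVec]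
      _ = (((ℓ : ZMod (ℓ ^ s)) ^ μ) • (D * B)).mulVec v := by rw [Matrix.smul_mulVec]
      _ = (((ℓ : ZMod (ℓ ^ s)) ^ μ) • (B * D)).mulVec v := by rw [hDB]
      _ = ((ℓ : ZMod (ℓ ^ s)) ^ μ) • (B.mulVec (D.mulVec v)) := by
          rw [Matrix.smul_mulVec, Matrix.mulVec_mulVec]
      _ = 0 := by rw [hDv, Matrix.mulVec_zero, smul_zero]
  have hD0 : ((ℓ : ZMod (ℓ ^ s)) ^ μ) • D = 0 := by
    have hp : (((ℓ : ZMod (ℓ ^ s)) ^ μ) • D) * P = 0 := by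
      ext i j
      fin_cases j
      · have h := congrFun hDv i
        simp only [Matrix.mulVec, dotProduct, Fin.sum_univ_two, Pi.zero_apply] at h
        simp only [Matrix.mul_apply, Fin.sum_univ_two, Matrix.smul_apply, smul_eq_mul,
          Matrix.zero_apply, Fin.mk_zero, Fin.mk_one]
        rw [hP0, hP0]
        linear_combination ((ℓ : ZMod (ℓ ^ s)) ^ μ) * h
      · have h := congrFun hDBv i
        simp only [Pi.smul_apply, Pi.zero_apply, smul_eq_mul, Matrix.mulVec,
          dotProduct, Fin.sum_univ_two] at h
        simp only [Matrix.mul_apply, Fin.sum_univ_two, Matrix.smul_apply, smul_eq_mul,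
          Matrix.zero_apply, Fin.mk_zero, Fin.mk_one]
        rw [hP1, hP1]
        simp only [Matrix.mulVec, dotProduct, Fin.sum_univ_two]
        linear_combination h
    calc ((ℓ : ZMod (ℓ ^ s)) ^ μ) • D
        = (((ℓ : ZMod (ℓ ^ s)) ^ μ) • D) * (P * P⁻¹) := by rw [hPinv, Matrix.mul_one]
      _ = ((((ℓ : ZMod (ℓ ^ s)) ^ μ) • D) * P) * P⁻¹ := by rw [Matrix.mul_assoc]
      _ = 0 := by rw [hp, Matrix.zero_mul]
  refine ⟨(((((ℓ : ZMod (ℓ ^ s)) ^ μ) * β)).val : ℤ), (((((ℓ : ZMod (ℓ ^ s)) ^ μ) * α)).val : ℤ), 0,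
    fun i j => ⟨0, by simp⟩, by simp, ?_⟩
  have hcast : ∀ (x : ZMod (ℓ ^ s)) (X : Matrix (Fin 2) (Fin 2) (ZMod (ℓ ^ s))),
      ((x.val : ℤ)) • X = x • X := by
    intro x X
    rw [← Int.cast_smul_eq_zsmul (ZMod (ℓ ^ s))]
    norm_cast
    rw [← Nat.cast_smul_eq_nsmul (ZMod (ℓ ^ s)), ZMod.natCast_rightInverse x]
  rw [hcast, hcast, add_zero]
  have hMD : M = α • 1 + β • B + D := by rw [hDdef]; abel
  rw [hMD]
  simp only [smul_add, hD0, add_zero, smul_smul]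
  rw [add_comm]
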